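/- Let p be an odd prime, m ≥ 1, and let A = (a,b;c,d) be a matrix over ℤ/p^mℤ whose discriminant (a+d)² - 4(ad - bc) is divisible by p and which is nonscalar modulo p. Then at least one of -b and c is a unit mod p, and if both are units then the Legendre symbols (-b/p) and (c/p) agree. -/

import Mathlib

theorem stmt_6 (p m : ℕ) [Fact p.Prime] (hp : p ≠ 2) (hm : m ≠ 0)
    (a b c d : ZMod (p ^ m))
    (hdisc : ZMod.castHom (dvd_pow_self p hm) (ZMod p) ((a + d) ^ 2 - 4 * (a * d - b * c)) = 0)
    (hns : ¬ (ZMod.castHom (dvd_pow_self p hm) (ZMod p) b = 0 ∧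
              ZMod.castHom (dvd_pow_self p hm) (ZMod p) c = 0 ∧
              ZMod.castHom (dvd_pow_self p hm) (ZMod p) a =
                ZMod.castHom (dvd_pow_self p hm) (ZMod p) d)) :
    (IsUnit (ZMod.castHom (dvd_pow_self p hm) (ZMod p) (-b)) ∨
      IsUnit (ZMod.castHom (dvd_pow_self p hm) (ZMod p) c)) ∧
    (IsUnit (ZMod.castHom (dvd_pow_self p hm) (ZMod p) (-b)) →
      IsUnit (ZMod.castHom (dvd_pow_self p hm) (ZMod p) c) →
      quadraticChar (ZMod p) (ZMod.castHom (dvd_pow_self p hm) (ZMod p) (-b)) =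
        quadraticChar (ZMod p) (ZMod.castHom (dvd_pow_self p hm) (ZMod p) c)) := by
  set f := ZMod.castHom (dvd_pow_self p hm) (ZMod p) with hf
  have hD : (f a + f d) ^ 2 - 4 * (f a * f d - f b * f c) = 0 := by
    simpa only [map_sub, map_add, map_mul, map_pow, map_ofNat] using hdisc
  have key : (f a - f d) ^ 2 = 4 * (f (-b) * f c) := by
    rw [map_neg]
    linear_combination hD
  have h2 : (2 : ZMod p) ≠ 0 := by
    have : ((2 : ℕ) : ZMod p) ≠ 0 := by
      rw [Ne, ZMod.natCast_eq_zero_iff]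
      exact fun h => hp ((Nat.prime_dvd_prime_iff_eq Fact.out Nat.prime_two).mp h)
    simpa using this
  constructor
  · by_contra h
    push_neg at h
    obtain ⟨hb, hc⟩ := h
    rw [isUnit_iff_ne_zero, not_ne_iff, map_neg, neg_eq_zero] at hb
    rw [isUnit_iff_ne_zero, not_ne_iff] at hc
    have : (f a - f d) ^ 2 = 0 := by rw [key, map_neg, hb, hc]; ring
    have had : f a = f d := by
      exact sub_eq_zero.mp (pow_eq_zero_iff (n := 2) (by norm_num) |>.mp this)
    exact hns ⟨hb, hc, had⟩
  · intro hb hc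
    rw [isUnit_iff_ne_zero] at hb hc
    set e := (f a - f d) * (2 : ZMod p)⁻¹ with he
    have hesq : e ^ 2 = f (-b) * f c := by
      rw [he, map_neg] at *
      field_simp
      linear_combination key
    have hene : e ≠ 0 := by
      have h2' : e ^ 2 ≠ 0 := hesq ▸ mul_ne_zero hb hc
      exact fun h0 => h2' (by rw [h0]; ring)
    have h1 : quadraticChar (ZMod p) (f (-b)) * quadraticChar (ZMod p) (f c) = 1 := by
      rw [← map_mul, ← hesq, quadraticChar_sq_one' hene]
    rcases quadraticChar_dichotomy hb with h | h <;>
      rcases quadraticChar_dichotomy hc with h' | h' <;>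
      rw [h, h'] at h1 ⊢ <;> norm_num at h1
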